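/- Let A be a row-substochastic matrix such that A is condensely aperiodic (every sink strongly connected component of the underlying digraph induces an aperiodic subgraph or is a single vertex without a self-loop). Then the limit lim_{t→∞} A^t exists and is row-substochastic. -/

import Mathlib

open Filter Matrix

def IsSCC {V : Type*} (r : V → V → Prop) (W : Set V) : Prop :=
  W.Nonempty ∧
  (∀ i ∈ W, ∀ j ∈ W, Relation.ReflTransGen r i j) ∧
  (∀ i ∈ W, ∀ j, Relation.ReflTransGen r i j → Relation.ReflTransGen r j i → j ∈ W)

def IsSinkSCC {V : Type*} (r : V → V → Prop) (W : Set V) : Prop :=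
  IsSCC r W ∧ ∀ i ∈ W, ∀ j, r i j → j ∈ W

/-- `WalkIn r W k i j`: there is a walk of length `k` from `i` to `j` whose vertices
(after the first) all lie in `W`. -/
def WalkIn {V : Type*} (r : V → V → Prop) (W : Set V) : ℕ → V → V → Prop
  | 0, i, j => i = j
  | (k+1), i, j => ∃ m ∈ W, r i m ∧ WalkIn r W k m j

lemma subOne_mem_aux (M : AddSubmonoid ℕ)
    (hd : ∀ d : ℕ, (∀ k ∈ M, d ∣ k) → d = 1) :
    ∃ q ∈ M, q + 1 ∈ M := by
  set G : AddSubgroup ℤ := AddSubgroup.closure ((↑) '' (M : Set ℕ)) with hG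
  obtain ⟨a, ha⟩ := Int.subgroup_cyclic G
  have hdvd : ∀ k ∈ M, a.natAbs ∣ k := by
    intro k hk
    have : (k : ℤ) ∈ G := AddSubgroup.subset_closure ⟨k, hk, rfl⟩
    rw [ha, AddSubgroup.mem_closure_singleton] at this
    obtain ⟨m, hm⟩ := this
    have hadvd : a ∣ (k : ℤ) := Dvd.intro_left m (by rw [← hm]; simp [smul_eq_mul])
    have := Int.natAbs_dvd_natAbs.mpr hadvd
    simpa using this
  have ha1 : a.natAbs = 1 := hd _ hdvd
  have h1G : (1 : ℤ) ∈ G := by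
    rw [ha, AddSubgroup.mem_closure_singleton]
    rcases Int.natAbs_eq a with h | h
    · exact ⟨1, by rw [one_smul]; omega⟩
    · exact ⟨-1, by rw [neg_smul, one_smul]; omega⟩
  set S : AddSubgroup ℤ :=
    { carrier := {z : ℤ | ∃ p ∈ M, ∃ q ∈ M, (p : ℤ) - q = z}
      add_mem' := by
        rintro x y ⟨p, hp, q, hq, rfl⟩ ⟨p', hp', q', hq', rfl⟩
        exact ⟨p + p', add_mem hp hp', q + q', add_mem hq hq', by push_cast; ring⟩
      zero_mem' := ⟨0, zero_mem M, 0, zero_mem M, by ring⟩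
      neg_mem' := by
        rintro x ⟨p, hp, q, hq, rfl⟩
        exact ⟨q, hq, p, hp, by ring⟩ } with hS
  have hGS : G ≤ S := by
    rw [hG]
    apply AddSubgroup.closure_le S |>.mpr
    rintro z ⟨k, hk, rfl⟩
    exact ⟨k, hk, 0, zero_mem M, by ring⟩
  obtain ⟨p, hp, q, hq, hpq⟩ := hGS h1G
  have : p = q + 1 := by omega
  exact ⟨q, hq, by rwa [← this]⟩

lemma semigroup_cofinite (M : AddSubmonoid ℕ)
    (hd : ∀ d : ℕ, (∀ k ∈ M, d ∣ k) → d = 1) :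
    ∃ B, ∀ t, B ≤ t → t ∈ M := by
  obtain ⟨q, hq, hq1⟩ := subOne_mem_aux M hd
  rcases Nat.eq_zero_or_pos q with h0 | h0
  · subst h0
    refine ⟨0, fun t _ => ?_⟩
    have : t • (0 + 1) ∈ M := nsmul_mem hq1 t
    simpa [smul_eq_mul] using this
  · refine ⟨q * q, fun t ht => ?_⟩
    have hr : t % q < q := Nat.mod_lt _ h0
    have hk : q ≤ t / q := Nat.le_div_iff_mul_le h0 |>.mpr (by nlinarith)
    have h2 : t % q ≤ t / q := le_trans (le_of_lt hr) hk
    have hdec : t = (t / q - t % q) * q + (t % q) * (q + 1) := by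
      have h3 := Nat.div_add_mod t q
      have : (t / q - t % q) * q = t / q * q - t % q * q := Nat.sub_mul _ _ _
      rw [this, Nat.mul_add, mul_one]
      have h4 : t % q * q ≤ t / q * q := Nat.mul_le_mul_right _ h2
      rw [← add_assoc, Nat.sub_add_cancel h4, mul_comm (t / q) q]
      omega
    rw [hdec]
    have m1 : (t / q - t % q) • q ∈ M := nsmul_mem hq _
    have m2 : (t % q) • (q + 1) ∈ M := nsmul_mem hq1 _
    simpa [smul_eq_mul] using add_mem m1 m2


section WalkLemmas
variable {V : Type*} {r : V → V → Prop} {W : Set V}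

lemma WalkIn.append {k l : ℕ} {i j m : V} (h1 : WalkIn r W k i j)
    (h2 : WalkIn r W l j m) : WalkIn r W (k + l) i m := by
  induction k generalizing i with
  | zero => cases h1; simpa using h2
  | succ k ih =>
    obtain ⟨x, hx, hr, hw⟩ := h1
    have he : (k + 1) + l = (k + l) + 1 := by omega
    rw [he]
    exact ⟨x, hx, hr, ih hw⟩

lemma reach_toWalkIn (hcl : ∀ a ∈ W, ∀ b, r a b → b ∈ W) {i j : V} (hi : i ∈ W)
    (h : Relation.ReflTransGen r i j) : (∃ k, WalkIn r W k i j) ∧ j ∈ W := by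
  induction h with
  | refl => exact ⟨⟨0, rfl⟩, hi⟩
  | tail hab hr ih =>
    obtain ⟨⟨k, hw⟩, hbW⟩ := ih
    have hcW := hcl _ hbW _ hr
    exact ⟨⟨k + 1, hw.append ⟨_, hcW, hr, rfl⟩⟩, hcW⟩

lemma exists_sinkSCC_reachable [Fintype V] (i : V) :
    ∃ W, IsSinkSCC r W ∧ ∃ v ∈ W, Relation.ReflTransGen r i v := by
  classical
  set R : V → Set V := fun x => {y | Relation.ReflTransGen r x y} with hR
  set T : Set V := R i with hT
  have hTfin : T.Finite := Set.toFinite T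
  have hTne : T.Nonempty := ⟨i, Relation.ReflTransGen.refl⟩
  obtain ⟨v, hvT, hvmin⟩ := Set.exists_min_image T (fun x => (R x).ncard) hTfin hTne
  have key : ∀ w, Relation.ReflTransGen r v w → Relation.ReflTransGen r w v := by
    intro w hvw
    have hwT : w ∈ T := Relation.ReflTransGen.trans hvT hvw
    have hsub : R w ⊆ R v := fun y hy => Relation.ReflTransGen.trans hvw hy
    have heq : R w = R v :=
      Set.eq_of_subset_of_ncard_le hsub (hvmin w hwT) (Set.toFinite _)
    have : v ∈ R w := heq ▸ (Relation.ReflTransGen.refl : v ∈ R v)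
    exact this
  refine ⟨{u | Relation.ReflTransGen r v u ∧ Relation.ReflTransGen r u v}, ⟨⟨⟨v, ?_, ?_⟩, ?_, ?_⟩, ?_⟩, v, ⟨Relation.ReflTransGen.refl, Relation.ReflTransGen.refl⟩, hvT⟩
  · exact Relation.ReflTransGen.refl
  · exact Relation.ReflTransGen.refl
  · rintro a ⟨hva, hav⟩ b ⟨hvb, hbv⟩
    exact hav.trans hvb
  · rintro a ⟨hva, hav⟩ b hab hba
    exact ⟨hva.trans hab, hba.trans hav⟩
  · rintro a ⟨hva, hav⟩ b hab
    have hvb : Relation.ReflTransGen r v b := hva.trans (Relation.ReflTransGen.single hab)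
    exact ⟨hvb, key b hvb⟩

end WalkLemmas

section MatrixLemmas
variable {n : ℕ} {A : Matrix (Fin n) (Fin n) ℝ}

lemma pow_apply_nonneg (h0 : ∀ i j, 0 ≤ A i j) : ∀ t i j, 0 ≤ (A ^ t) i j := by
  intro t
  induction t with
  | zero => intro i j; rcases eq_or_ne i j with h | h <;> simp [h, Matrix.one_apply]
  | succ t ih =>
    intro i j
    rw [pow_succ, Matrix.mul_apply]
    exact Finset.sum_nonneg fun k _ => mul_nonneg (ih i k) (h0 k j)

lemma pow_row_sum_le (h0 : ∀ i j, 0 ≤ A i j) (h1 : ∀ i, ∑ j, A i j ≤ 1) :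
    ∀ t i, ∑ j, (A ^ t) i j ≤ 1 := by
  intro t
  induction t with
  | zero => intro i; simp [Matrix.one_apply]
  | succ t ih =>
    intro i
    rw [pow_succ']
    calc ∑ j, (A * A ^ t) i j = ∑ j, ∑ k, A i k * (A ^ t) k j := by
          simp [Matrix.mul_apply]
      _ = ∑ k, A i k * ∑ j, (A ^ t) k j := by
          rw [Finset.sum_comm]; simp [Finset.mul_sum]
      _ ≤ ∑ k, A i k * 1 := by
          refine Finset.sum_le_sum fun k _ => ?_
          exact mul_le_mul_of_nonneg_left (ih k) (h0 i k)
      _ ≤ 1 := by simpa using h1 i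

lemma pow_apply_pos_of_walk (h0 : ∀ i j, 0 ≤ A i j) {W : Set (Fin n)} :
    ∀ {t i j}, WalkIn (fun a b => A a b ≠ 0) W t i j → 0 < (A ^ t) i j := by
  intro t
  induction t with
  | zero => intro i j h; cases h; simp [Matrix.one_apply]
  | succ t ih =>
    rintro i j ⟨m, hm, hr, hw⟩
    rw [pow_succ', Matrix.mul_apply]
    have hpos : 0 < A i m * (A ^ t) m j :=
      mul_pos ((h0 i m).lt_of_ne (Ne.symm hr)) (ih hw)
    refine lt_of_lt_of_le hpos ?_
    exact Finset.single_le_sum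
      (fun k _ => mul_nonneg (h0 i k) (_root_.pow_apply_nonneg h0 t k j)) (Finset.mem_univ m)

/-- mass cannot enter `C` from outside when the complement of `C` is closed -/
lemma pow_apply_eq_zero {C : Set (Fin n)}
    (hcl : ∀ a b, a ∉ C → A a b ≠ 0 → b ∉ C) :
    ∀ t, ∀ a ∉ C, ∀ j ∈ C, (A ^ t) a j = 0 := by
  intro t
  induction t with
  | zero =>
    intro a ha j hj
    exact Matrix.one_apply_ne (fun h => ha (h ▸ hj))
  | succ t ih =>
    intro a ha j hj
    rw [pow_succ', Matrix.mul_apply]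
    refine Finset.sum_eq_zero fun k _ => ?_
    by_cases hk : A a k = 0
    · rw [hk, zero_mul]
    · rw [ih k (hcl a k ha hk) j hj, mul_zero]

/-- walks from a closed set stay inside -/
lemma pow_apply_eq_zero_of_closed {W : Set (Fin n)}
    (hcl : ∀ a ∈ W, ∀ b, A a b ≠ 0 → b ∈ W) :
    ∀ t, ∀ a ∈ W, ∀ j ∉ W, (A ^ t) a j = 0 := by
  intro t a ha j hj
  exact pow_apply_eq_zero (C := Wᶜ)
    (fun a b ha hab hb => hb (hcl a (not_not.mp ha) b hab)) t a (not_not_intro ha) j hj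

lemma pow_row_sum_eq_one {W : Set (Fin n)}
    (hcl : ∀ a ∈ W, ∀ b, A a b ≠ 0 → b ∈ W)
    (hfull : ∀ a ∈ W, ∑ j, A a j = 1) :
    ∀ t, ∀ a ∈ W, ∑ j, (A ^ t) a j = 1 := by
  intro t
  induction t with
  | zero => intro a _; simp [Matrix.one_apply]
  | succ t ih =>
    intro a ha
    rw [pow_succ']
    calc ∑ j, (A * A ^ t) a j = ∑ j, ∑ k, A a k * (A ^ t) k j := by
          simp [Matrix.mul_apply]
      _ = ∑ k, A a k * ∑ j, (A ^ t) k j := by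
          rw [Finset.sum_comm]; simp [Finset.mul_sum]
      _ = ∑ k, A a k := by
          refine Finset.sum_congr rfl fun k _ => ?_
          by_cases hk : A a k = 0
          · rw [hk, zero_mul]
          · rw [ih k (hcl a ha k hk), mul_one]
      _ = 1 := hfull a ha

end MatrixLemmas

open scoped Classical

section Decay
variable {n : ℕ} (A : Matrix (Fin n) (Fin n) ℝ)

/-- the union of all "surviving" (stochastic) sink SCCs -/
def recSet : Set (Fin n) :=
  {j | ∃ W, IsSinkSCC (fun a b => A a b ≠ 0) W ∧ j ∈ W ∧ ∀ w ∈ W, ∑ k, A w k = 1}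

/-- total mass outside the recurrent set -/
noncomputable def fmass (t : ℕ) (i : Fin n) : ℝ :=
  ∑ j ∈ Finset.univ.filter (fun j => j ∉ recSet A), (A ^ t) i j

variable {A}

lemma recSet_closed {a b : Fin n} (ha : a ∈ recSet A) (hab : A a b ≠ 0) :
    b ∈ recSet A := by
  obtain ⟨W, hW, haW, hfull⟩ := ha
  exact ⟨W, hW, hW.2 a haW b hab, hfull⟩

lemma fmass_nonneg (h0 : ∀ i j, 0 ≤ A i j) (t : ℕ) (i : Fin n) : 0 ≤ fmass A t i :=
  Finset.sum_nonneg fun j _ => _root_.pow_apply_nonneg h0 t i j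

lemma fmass_le_one (h0 : ∀ i j, 0 ≤ A i j) (h1 : ∀ i, ∑ j, A i j ≤ 1) (t : ℕ) (i : Fin n) :
    fmass A t i ≤ 1 := by
  refine le_trans ?_ (pow_row_sum_le h0 h1 t i)
  exact Finset.sum_le_sum_of_subset_of_nonneg (Finset.subset_univ _)
    (fun j _ _ => _root_.pow_apply_nonneg h0 t i j)

lemma fmass_zero_of_rec (t : ℕ) {i : Fin n} (hi : i ∈ recSet A) : fmass A t i = 0 := by
  refine Finset.sum_eq_zero fun j hj => ?_
  rw [Finset.mem_filter] at hj
  exact pow_apply_eq_zero_of_closed (fun a ha b hab => recSet_closed ha hab) t i hi j hj.2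

lemma fmass_add (s t : ℕ) (i : Fin n) :
    fmass A (s + t) i = ∑ l, (A ^ s) i l * fmass A t l := by
  unfold fmass
  rw [pow_add]
  simp only [Matrix.mul_apply]
  rw [Finset.sum_comm]
  simp [Finset.mul_sum]

end Decay

section Decay2
variable {n : ℕ} {A : Matrix (Fin n) (Fin n) ℝ}

lemma fmass_one_le (h0 : ∀ i j, 0 ≤ A i j) (h1 : ∀ i, ∑ j, A i j ≤ 1) (i : Fin n) :
    fmass A 1 i ≤ 1 := fmass_le_one h0 h1 1 i

lemma fmass_antitone (h0 : ∀ i j, 0 ≤ A i j) (h1 : ∀ i, ∑ j, A i j ≤ 1) (i : Fin n)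
    {s t : ℕ} (hst : s ≤ t) : fmass A t i ≤ fmass A s i := by
  -- first: one-step monotonicity for all i, by induction on t
  have key : ∀ t i, fmass A (t + 1) i ≤ fmass A t i := by
    intro t
    induction t with
    | zero =>
      intro i
      by_cases hi : i ∈ recSet A
      · rw [fmass_zero_of_rec 1 hi, fmass_zero_of_rec 0 hi]
      · refine le_trans (fmass_le_one h0 h1 1 i) ?_
        unfold fmass
        rw [Finset.sum_eq_single i]
        · simp [Matrix.one_apply]
        · intro b hb hbi; simp [Matrix.one_apply, Ne.symm hbi]
        · intro hi'; exact absurd (Finset.mem_filter.mpr ⟨Finset.mem_univ i, hi⟩) hi'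
    | succ t ih =>
      intro i
      have e1 : fmass A (t + 1 + 1) i = ∑ l, A i l * fmass A (t + 1) l := by
        have := fmass_add (A := A) 1 (t + 1) i
        simpa [pow_one, add_comm] using this
      have e2 : fmass A (t + 1) i = ∑ l, A i l * fmass A t l := by
        have := fmass_add (A := A) 1 t i
        simpa [pow_one, add_comm] using this
      rw [e1, e2]
      exact Finset.sum_le_sum fun l _ => mul_le_mul_of_nonneg_left (ih l) (h0 i l)
  induction hst with
  | refl => exact le_refl _
  | step h ih => exact le_trans (key _ i) ih

lemma fmass_escape (h0 : ∀ i j, 0 ≤ A i j) (h1 : ∀ i, ∑ j, A i j ≤ 1) {v : Fin n}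
    (hv : v ∈ recSet A ∨ ∑ j, A v j < 1) :
    ∀ x, Relation.ReflTransGen (fun a b => A a b ≠ 0) x v → x ∉ recSet A →
      ∃ t, 1 ≤ t ∧ fmass A t x < 1 := by
  intro x hx
  induction hx using Relation.ReflTransGen.head_induction_on with
  | refl =>
    intro hvrec
    rcases hv with h | h
    · exact absurd h hvrec
    · refine ⟨1, le_refl 1, ?_⟩
      refine lt_of_le_of_lt ?_ h
      unfold fmass
      rw [pow_one]
      exact Finset.sum_le_sum_of_subset_of_nonneg (Finset.subset_univ _)
        (fun j _ _ => h0 v j)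
  | head hac hcb ih =>
    rename_i a c
    intro ha
    by_cases hc : c ∈ recSet A
    · refine ⟨1, le_refl 1, ?_⟩
      have hsplit :
          fmass A 1 a + ∑ j ∈ Finset.univ.filter (fun j => j ∈ recSet A), A a j
            = ∑ j, A a j := by
        unfold fmass
        rw [pow_one]
        rw [add_comm]
        exact Finset.sum_filter_add_sum_filter_not Finset.univ (fun j => j ∈ recSet A) _
      have hac' : A a c ≤ ∑ j ∈ Finset.univ.filter (fun j => j ∈ recSet A), A a j :=
        Finset.single_le_sum (fun j _ => h0 a j)
          (Finset.mem_filter.mpr ⟨Finset.mem_univ c, hc⟩)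
      have hacpos : 0 < A a c := (h0 a c).lt_of_ne (Ne.symm hac)
      have := h1 a
      linarith
    · obtain ⟨t, ht1, htc⟩ := ih hc
      refine ⟨t + 1, by omega, ?_⟩
      have e1 : fmass A (t + 1) a = ∑ l, A a l * fmass A t l := by
        have := fmass_add (A := A) 1 t a
        simpa [pow_one, add_comm] using this
      rw [e1]
      have hlt : ∑ l, A a l * fmass A t l < ∑ l, A a l * 1 := by
        refine Finset.sum_lt_sum
          (fun l _ => mul_le_mul_of_nonneg_left (fmass_le_one h0 h1 t l) (h0 a l)) ?_
        exact ⟨c, Finset.mem_univ c,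
          by exact mul_lt_mul_of_pos_left htc ((h0 a c).lt_of_ne (Ne.symm hac))⟩
      calc ∑ l, A a l * fmass A t l < ∑ l, A a l * 1 := hlt
        _ ≤ 1 := by simpa using h1 a

lemma fmass_eventually_lt (h0 : ∀ i j, 0 ≤ A i j) (h1 : ∀ i, ∑ j, A i j ≤ 1) :
    ∀ i, i ∉ recSet A → ∃ t, 1 ≤ t ∧ fmass A t i < 1 := by
  intro i hi
  obtain ⟨W, hW, v, hvW, hreach⟩ :=
    exists_sinkSCC_reachable (r := fun a b : Fin n => A a b ≠ 0) i
  by_cases hfull : ∀ w ∈ W, ∑ k, A w k = 1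
  · exact fmass_escape h0 h1 (Or.inl ⟨W, hW, hvW, hfull⟩) i hreach hi
  · push_neg at hfull
    obtain ⟨w, hwW, hwne⟩ := hfull
    have hwlt : ∑ k, A w k < 1 := lt_of_le_of_ne (h1 w) hwne
    have hvw : Relation.ReflTransGen (fun a b => A a b ≠ 0) v w :=
      hW.1.2.1 v hvW w hwW
    exact fmass_escape h0 h1 (Or.inr hwlt) i (hreach.trans hvw) hi

lemma exists_decay_params (h0 : ∀ i j, 0 ≤ A i j) (h1 : ∀ i, ∑ j, A i j ≤ 1) :
    ∃ m γ, 1 ≤ m ∧ 0 ≤ γ ∧ γ < 1 ∧ ∀ i : Fin n, fmass A m i ≤ γ := by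
  have H : ∀ i : Fin n, ∃ t, 1 ≤ t ∧ (i ∉ recSet A → fmass A t i < 1) := by
    intro i
    by_cases hi : i ∈ recSet A
    · exact ⟨1, le_refl 1, fun h => absurd hi h⟩
    · obtain ⟨t, ht, hlt⟩ := fmass_eventually_lt h0 h1 i hi
      exact ⟨t, ht, fun _ => hlt⟩
  choose g hg1 hg2 using H
  set m : ℕ := max 1 (Finset.univ.sup g) with hm
  have hm1 : 1 ≤ m := le_max_left _ _
  have hmono : ∀ i, i ∉ recSet A → fmass A m i < 1 := by
    intro i hi
    refine lt_of_le_of_lt (fmass_antitone h0 h1 i ?_) (hg2 i hi)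
    exact le_trans (Finset.le_sup (Finset.mem_univ i)) (le_max_right _ _)
  set NR : Finset (Fin n) := Finset.univ.filter (fun i => i ∉ recSet A) with hNR
  rcases NR.eq_empty_or_nonempty with hne | hne
  · refine ⟨m, 0, hm1, le_refl 0, one_pos, fun i => ?_⟩
    have hi : i ∈ recSet A := by
      by_contra hi
      have : i ∈ NR := Finset.mem_filter.mpr ⟨Finset.mem_univ i, hi⟩
      simp [hne] at this
    rw [fmass_zero_of_rec m hi]
  · refine ⟨m, NR.sup' hne (fmass A m), hm1, ?_, ?_, ?_⟩
    · obtain ⟨i, hi⟩ := hne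
      exact le_trans (fmass_nonneg h0 m i) (Finset.le_sup' _ hi)
    · rw [Finset.sup'_lt_iff]
      intro i hi
      exact hmono i (Finset.mem_filter.mp hi).2
    · intro i
      by_cases hi : i ∈ recSet A
      · rw [fmass_zero_of_rec m hi]
        obtain ⟨i', hi'⟩ := hne
        exact le_trans (fmass_nonneg h0 m i') (Finset.le_sup' _ hi')
      · exact Finset.le_sup' _ (Finset.mem_filter.mpr ⟨Finset.mem_univ i, hi⟩)

lemma fmass_geom (h0 : ∀ i j, 0 ≤ A i j) (h1 : ∀ i, ∑ j, A i j ≤ 1)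
    {m : ℕ} {γ : ℝ} (hγ0 : 0 ≤ γ) (hγ : ∀ i : Fin n, fmass A m i ≤ γ) :
    ∀ k i, fmass A (k * m) i ≤ γ ^ k := by
  intro k
  induction k with
  | zero => intro i; simpa using fmass_le_one h0 h1 0 i
  | succ k ih =>
    intro i
    have e : (k + 1) * m = m + k * m := by ring
    rw [e, fmass_add]
    calc ∑ l, (A ^ m) i l * fmass A (k * m) l
        = ∑ l ∈ Finset.univ.filter (fun l => l ∉ recSet A),
            (A ^ m) i l * fmass A (k * m) l := by
          refine (Finset.sum_subset (Finset.subset_univ _) fun l _ hl => ?_).symm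
          have : l ∈ recSet A := by
            by_contra h
            exact hl (Finset.mem_filter.mpr ⟨Finset.mem_univ l, h⟩)
          rw [fmass_zero_of_rec _ this, mul_zero]
      _ ≤ ∑ l ∈ Finset.univ.filter (fun l => l ∉ recSet A), (A ^ m) i l * γ ^ k := by
          refine Finset.sum_le_sum fun l _ => ?_
          exact mul_le_mul_of_nonneg_left (ih l) (_root_.pow_apply_nonneg h0 m i l)
      _ = fmass A m i * γ ^ k := by rw [← Finset.sum_mul]; rfl
      _ ≤ γ * γ ^ k := mul_le_mul_of_nonneg_right (hγ i) (pow_nonneg hγ0 k)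
      _ = γ ^ (k + 1) := (pow_succ' γ k).symm

lemma tendsto_zero_of_not_rec (h0 : ∀ i j, 0 ≤ A i j) (h1 : ∀ i, ∑ j, A i j ≤ 1)
    {j : Fin n} (hj : j ∉ recSet A) (i : Fin n) :
    Tendsto (fun t => (A ^ t) i j) atTop (nhds 0) := by
  obtain ⟨m, γ, hm1, hγ0, hγ1, hγ⟩ := exists_decay_params h0 h1
  have hb : ∀ t, (A ^ t) i j ≤ γ ^ (t / m) := by
    intro t
    have h1' : (A ^ t) i j ≤ fmass A t i :=
      Finset.single_le_sum (fun l _ => _root_.pow_apply_nonneg h0 t i l)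
        (Finset.mem_filter.mpr ⟨Finset.mem_univ j, hj⟩)
    have h2' : fmass A t i ≤ fmass A ((t / m) * m) i :=
      fmass_antitone h0 h1 i (Nat.div_mul_le_self t m)
    exact le_trans h1' (le_trans h2' (fmass_geom h0 h1 hγ0 hγ (t / m) i))
  refine squeeze_zero (fun t => _root_.pow_apply_nonneg h0 t i j) hb ?_
  have hdiv : Tendsto (fun t : ℕ => t / m) atTop atTop := by
    conv_rhs => rw [← Filter.map_div_atTop_eq_nat m hm1]
    exact tendsto_map
  exact (tendsto_pow_atTop_nhds_zero_of_lt_one hγ0 hγ1).comp hdiv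

end Decay2

section Primitive
variable {n : ℕ} {A : Matrix (Fin n) (Fin n) ℝ}

lemma exists_uniform_walk {W : Set (Fin n)}
    (hW : IsSinkSCC (fun a b => A a b ≠ 0) W)
    (hcyc : ∃ k, 0 < k ∧ ∃ i ∈ W, WalkIn (fun a b => A a b ≠ 0) W k i i)
    (hgcd : ∀ d : ℕ,
      (∀ k, 0 < k → (∃ i ∈ W, WalkIn (fun a b => A a b ≠ 0) W k i i) → d ∣ k) →
      d = 1) :
    ∃ N, ∀ k ∈ W, ∀ l ∈ W, WalkIn (fun a b => A a b ≠ 0) W N k l := by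
  classical
  obtain ⟨k0, hk0pos, i0, hi0W, hw0⟩ := hcyc
  set r : Fin n → Fin n → Prop := fun a b => A a b ≠ 0 with hr
  have hcl : ∀ a ∈ W, ∀ b, r a b → b ∈ W := hW.2
  set M : AddSubmonoid ℕ :=
    { carrier := {c | WalkIn r W c i0 i0}
      add_mem' := fun h1 h2 => WalkIn.append h1 h2
      zero_mem' := rfl } with hM
  have hd : ∀ d : ℕ, (∀ k ∈ M, d ∣ k) → d = 1 := by
    intro d hdM
    apply hgcd
    rintro k hk ⟨i, hiW, hw⟩
    obtain ⟨⟨a, wa⟩, -⟩ := reach_toWalkIn hcl hi0W (hW.1.2.1 i0 hi0W i hiW)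
    obtain ⟨⟨b, wb⟩, -⟩ := reach_toWalkIn hcl hiW (hW.1.2.1 i hiW i0 hi0W)
    have h1 : d ∣ a + b := hdM _ (wa.append wb)
    have h2 : d ∣ a + (k + b) := hdM _ (wa.append (hw.append wb))
    have h3 := Nat.dvd_sub h2 h1
    have he : a + (k + b) - (a + b) = k := by omega
    rwa [he] at h3
  obtain ⟨B, hB⟩ := semigroup_cofinite M hd
  have Hp : ∀ k : Fin n, ∃ a, k ∈ W → WalkIn r W a k i0 := by
    intro k
    by_cases hk : k ∈ W
    · obtain ⟨⟨a, wa⟩, -⟩ := reach_toWalkIn hcl hk (hW.1.2.1 k hk i0 hi0W)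
      exact ⟨a, fun _ => wa⟩
    · exact ⟨0, fun h => absurd h hk⟩
  have Hq : ∀ k : Fin n, ∃ a, k ∈ W → WalkIn r W a i0 k := by
    intro k
    by_cases hk : k ∈ W
    · obtain ⟨⟨a, wa⟩, -⟩ := reach_toWalkIn hcl hi0W (hW.1.2.1 i0 hi0W k hk)
      exact ⟨a, fun _ => wa⟩
    · exact ⟨0, fun h => absurd h hk⟩
  choose p hp using Hp
  choose q hq using Hq
  set N : ℕ := B + Finset.univ.sup p + Finset.univ.sup q with hN
  refine ⟨N, fun k hk l hl => ?_⟩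
  have hpk : p k ≤ Finset.univ.sup p := Finset.le_sup (Finset.mem_univ k)
  have hql : q l ≤ Finset.univ.sup q := Finset.le_sup (Finset.mem_univ l)
  set c : ℕ := N - p k - q l with hc
  have hcB : B ≤ c := by omega
  have htot : p k + (c + q l) = N := by omega
  have wmid : WalkIn r W c i0 i0 := hB c hcB
  have := (hp k hk).append (wmid.append (hq l hl))
  rwa [htot] at this

end Primitive

section WithinClass
variable {n : ℕ} {A : Matrix (Fin n) (Fin n) ℝ}

lemma sum_W_pow_eq_one {W : Set (Fin n)}
    (hcl : ∀ a ∈ W, ∀ b, A a b ≠ 0 → b ∈ W)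
    (hfull : ∀ w ∈ W, ∑ k, A w k = 1) (t : ℕ) {a : Fin n} (ha : a ∈ W) :
    ∑ k ∈ Finset.univ.filter (fun x => x ∈ W), (A ^ t) a k = 1 := by
  rw [Finset.sum_subset (Finset.subset_univ _) (fun l _ hl =>
    pow_apply_eq_zero_of_closed hcl t a ha l (fun h =>
      hl (Finset.mem_filter.mpr ⟨Finset.mem_univ l, h⟩)))]
  exact pow_row_sum_eq_one hcl hfull t a ha

lemma chapman_W {W : Set (Fin n)}
    (hcl : ∀ a ∈ W, ∀ b, A a b ≠ 0 → b ∈ W)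
    {a : Fin n} (ha : a ∈ W) (s t : ℕ) (j : Fin n) :
    (A ^ (s + t)) a j
      = ∑ l ∈ Finset.univ.filter (fun x => x ∈ W), (A ^ s) a l * (A ^ t) l j := by
  rw [pow_add, Matrix.mul_apply]
  refine (Finset.sum_subset (Finset.subset_univ _) fun l _ hl => ?_).symm
  rw [pow_apply_eq_zero_of_closed hcl s a ha l
    (fun h => hl (Finset.mem_filter.mpr ⟨Finset.mem_univ l, h⟩)), zero_mul]

lemma within_class_conv (h0 : ∀ i j, 0 ≤ A i j) {W : Set (Fin n)}
    (hW : IsSinkSCC (fun a b => A a b ≠ 0) W)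
    (hfull : ∀ w ∈ W, ∑ k, A w k = 1)
    (hcyc : ∃ k, 0 < k ∧ ∃ i ∈ W, WalkIn (fun a b => A a b ≠ 0) W k i i)
    (hgcd : ∀ d : ℕ,
      (∀ k, 0 < k → (∃ i ∈ W, WalkIn (fun a b => A a b ≠ 0) W k i i) → d ∣ k) →
      d = 1) {j : Fin n} (hjW : j ∈ W) :
    ∃ π : ℝ, 0 ≤ π ∧ π ≤ 1 ∧
      ∀ ε : ℝ, 0 < ε → ∃ u0, ∀ u, u0 ≤ u → ∀ k ∈ W, |(A ^ u) k j - π| < ε := by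
  classical
  have hcl : ∀ a ∈ W, ∀ b, A a b ≠ 0 → b ∈ W := hW.2
  set Wf : Finset (Fin n) := Finset.univ.filter (fun x => x ∈ W) with hWf
  have hmemWf : ∀ x : Fin n, x ∈ Wf ↔ x ∈ W := by
    intro x; rw [hWf, Finset.mem_filter]; simp
  have hne : Wf.Nonempty := ⟨j, (hmemWf _).mpr hjW⟩
  set Mx : ℕ → ℝ := fun t => Wf.sup' hne (fun k => (A ^ t) k j) with hMx
  set mn : ℕ → ℝ := fun t => Wf.inf' hne (fun k => (A ^ t) k j) with hmn
  have hub : ∀ t, ∀ k ∈ W, (A ^ t) k j ≤ Mx t :=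
    fun t k hk => Finset.le_sup' (fun k => (A ^ t) k j) ((hmemWf _).mpr hk)
  have hlb : ∀ t, ∀ k ∈ W, mn t ≤ (A ^ t) k j :=
    fun t k hk => Finset.inf'_le (fun k => (A ^ t) k j) ((hmemWf _).mpr hk)
  have hmn_nonneg : ∀ t, 0 ≤ mn t := by
    intro t
    obtain ⟨k, hk, he⟩ := Finset.exists_mem_eq_inf' hne (fun k => (A ^ t) k j)
    have he' : mn t = (A ^ t) k j := he
    rw [he']; exact _root_.pow_apply_nonneg h0 t k j
  have hMx_le_one : ∀ t, Mx t ≤ 1 := by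
    intro t
    rw [Finset.sup'_le_iff]
    intro k hk
    refine le_trans (Finset.single_le_sum (f := fun l => (A ^ t) k l)
      (fun l _ => _root_.pow_apply_nonneg h0 t k l) ((hmemWf _).mpr hjW)) ?_
    exact le_of_eq (sum_W_pow_eq_one hcl hfull t ((hmemWf _).mp hk))
  have hmn_le_Mx : ∀ t, mn t ≤ Mx t := fun t => le_trans (hlb t j hjW) (hub t j hjW)
  -- monotonicity
  have hMx_anti : ∀ s t, Mx (s + t) ≤ Mx t := by
    intro s t
    rw [Finset.sup'_le_iff]
    intro k hk
    rw [chapman_W hcl ((hmemWf _).mp hk) s t j]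
    calc ∑ l ∈ Wf, (A ^ s) k l * (A ^ t) l j
        ≤ ∑ l ∈ Wf, (A ^ s) k l * Mx t := by
          refine Finset.sum_le_sum fun l hl => ?_
          exact mul_le_mul_of_nonneg_left (hub t l ((hmemWf _).mp hl))
            (_root_.pow_apply_nonneg h0 s k l)
      _ = Mx t := by
          rw [← Finset.sum_mul, sum_W_pow_eq_one hcl hfull s ((hmemWf _).mp hk), one_mul]
  have hmn_mono : ∀ s t, mn t ≤ mn (s + t) := by
    intro s t
    rw [Finset.le_inf'_iff]
    intro k hk
    rw [chapman_W hcl ((hmemWf _).mp hk) s t j]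
    calc mn t
        = ∑ l ∈ Wf, (A ^ s) k l * mn t := by
          rw [← Finset.sum_mul, sum_W_pow_eq_one hcl hfull s ((hmemWf _).mp hk), one_mul]
      _ ≤ ∑ l ∈ Wf, (A ^ s) k l * (A ^ t) l j := by
          refine Finset.sum_le_sum fun l hl => ?_
          exact mul_le_mul_of_nonneg_left (hlb t l ((hmemWf _).mp hl))
            (_root_.pow_apply_nonneg h0 s k l)
  -- the contraction
  obtain ⟨N, hN⟩ := exists_uniform_walk hW hcyc hgcd
  set δ : ℝ := (Wf ×ˢ Wf).inf' (hne.product hne) (fun p => (A ^ N) p.1 p.2) with hδdef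
  have hδpos : 0 < δ := by
    rw [hδdef, Finset.lt_inf'_iff]
    rintro ⟨k, l⟩ hkl
    rw [Finset.mem_product] at hkl
    exact pow_apply_pos_of_walk h0 (hN k ((hmemWf _).mp hkl.1) l ((hmemWf _).mp hkl.2))
  have hδle : ∀ k ∈ W, ∀ l ∈ W, δ ≤ (A ^ N) k l := by
    intro k hk l hl
    have hmem : (k, l) ∈ Wf ×ˢ Wf :=
      Finset.mem_product.mpr ⟨(hmemWf k).mpr hk, (hmemWf l).mpr hl⟩
    exact Finset.inf'_le (fun p => (A ^ N) p.1 p.2) hmem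
  have hcontr : ∀ t, Mx (N + t) - mn (N + t) ≤ (1 - 2 * δ) * (Mx t - mn t) := by
    intro t
    obtain ⟨l0, hl0, hel0⟩ := Finset.exists_mem_eq_inf' hne (fun k => (A ^ t) k j)
    obtain ⟨l1, hl1, hel1⟩ := Finset.exists_mem_eq_sup' hne (fun k => (A ^ t) k j)
    have hel0' : mn t = (A ^ t) l0 j := hel0
    have hel1' : Mx t = (A ^ t) l1 j := hel1
    have key : ∀ k ∈ W,
        ∑ l ∈ Wf, (A ^ N) k l * ((A ^ t) l j - mn t) ≤ (1 - δ) * (Mx t - mn t) := by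
      intro k hk
      have hzero : (A ^ N) k l0 * ((A ^ t) l0 j - mn t) = 0 := by
        rw [← hel0', sub_self, mul_zero]
      calc ∑ l ∈ Wf, (A ^ N) k l * ((A ^ t) l j - mn t)
          = ∑ l ∈ Wf.erase l0, (A ^ N) k l * ((A ^ t) l j - mn t) :=
            (Finset.sum_erase Wf hzero).symm
        _ ≤ ∑ l ∈ Wf.erase l0, (A ^ N) k l * (Mx t - mn t) := by
            refine Finset.sum_le_sum fun l hl => ?_
            have hlW := (hmemWf _).mp (Finset.mem_of_mem_erase hl)
            refine mul_le_mul_of_nonneg_left ?_ (_root_.pow_apply_nonneg h0 N k l)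
            exact sub_le_sub_right (hub t l hlW) _
        _ = (∑ l ∈ Wf.erase l0, (A ^ N) k l) * (Mx t - mn t) := by
            rw [Finset.sum_mul]
        _ = (1 - (A ^ N) k l0) * (Mx t - mn t) := by
            have hsum : ∑ l ∈ Wf.erase l0, (A ^ N) k l + (A ^ N) k l0
                = ∑ l ∈ Wf, (A ^ N) k l := Finset.sum_erase_add Wf _ hl0
            have h2 : ∑ l ∈ Wf, (A ^ N) k l = 1 := sum_W_pow_eq_one hcl hfull N hk
            congr 1
            linarith
        _ ≤ (1 - δ) * (Mx t - mn t) := by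
            refine mul_le_mul_of_nonneg_right ?_ (by linarith [hmn_le_Mx t])
            have := hδle k hk l0 ((hmemWf _).mp hl0)
            linarith
    have key2 : ∀ k ∈ W,
        δ * (Mx t - mn t) ≤ ∑ l ∈ Wf, (A ^ N) k l * ((A ^ t) l j - mn t) := by
      intro k hk
      have hterm : δ * (Mx t - mn t) ≤ (A ^ N) k l1 * ((A ^ t) l1 j - mn t) := by
        have h1 := hδle k hk l1 ((hmemWf _).mp hl1)
        have h2 : (A ^ t) l1 j - mn t = Mx t - mn t := by rw [hel1']
        rw [h2]
        exact mul_le_mul_of_nonneg_right h1 (by linarith [hmn_le_Mx t])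
      refine le_trans hterm ?_
      refine Finset.single_le_sum (f := fun l => (A ^ N) k l * ((A ^ t) l j - mn t))
        (fun l hl => ?_) hl1
      exact mul_nonneg (_root_.pow_apply_nonneg h0 N k l)
        (by linarith [hlb t l ((hmemWf _).mp hl)])
    -- translate into bounds on A^(N+t) entries
    have expand : ∀ k ∈ W, (A ^ (N + t)) k j
        = ∑ l ∈ Wf, (A ^ N) k l * ((A ^ t) l j - mn t) + mn t := by
      intro k hk
      rw [chapman_W hcl hk N t j]
      have : ∑ l ∈ Wf, (A ^ N) k l * ((A ^ t) l j - mn t)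
          = ∑ l ∈ Wf, (A ^ N) k l * (A ^ t) l j - (∑ l ∈ Wf, (A ^ N) k l) * mn t := by
        rw [Finset.sum_mul, ← Finset.sum_sub_distrib]
        congr 1; ext l; ring
      rw [this, sum_W_pow_eq_one hcl hfull N hk, one_mul]
      ring
    have hMxb : Mx (N + t) ≤ (1 - δ) * (Mx t - mn t) + mn t := by
      rw [Finset.sup'_le_iff]
      intro k hk
      rw [expand k ((hmemWf _).mp hk)]
      linarith [key k ((hmemWf _).mp hk)]
    have hmnb : δ * (Mx t - mn t) + mn t ≤ mn (N + t) := by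
      rw [Finset.le_inf'_iff]
      intro k hk
      rw [expand k ((hmemWf _).mp hk)]
      linarith [key2 k ((hmemWf _).mp hk)]
    linarith
  -- oscillation bound
  set ρ : ℝ := max 0 (1 - 2 * δ) with hρ
  have hρ0 : 0 ≤ ρ := le_max_left _ _
  have hρ1 : ρ < 1 := by
    rw [hρ, max_lt_iff]
    constructor <;> linarith
  have hosc_anti : ∀ s t, Mx (s + t) - mn (s + t) ≤ Mx t - mn t := by
    intro s t
    linarith [hMx_anti s t, hmn_mono s t]
  have hosc0 : ∀ t, 0 ≤ Mx t - mn t := fun t => by linarith [hmn_le_Mx t]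
  have hosc_geom : ∀ k, Mx (k * N) - mn (k * N) ≤ ρ ^ k := by
    intro k
    induction k with
    | zero => simpa using by linarith [hMx_le_one 0, hmn_nonneg 0]
    | succ k ih =>
      have he : (k + 1) * N = N + k * N := by ring
      rw [he]
      calc Mx (N + k * N) - mn (N + k * N)
          ≤ (1 - 2 * δ) * (Mx (k * N) - mn (k * N)) := hcontr (k * N)
        _ ≤ ρ * (Mx (k * N) - mn (k * N)) :=
            mul_le_mul_of_nonneg_right (le_max_right _ _) (hosc0 _)
        _ ≤ ρ * ρ ^ k := mul_le_mul_of_nonneg_left ih hρ0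
        _ = ρ ^ (k + 1) := (pow_succ' ρ k).symm
  -- the limit
  set π : ℝ := ⨅ t, Mx t with hπ
  have hbdd : BddBelow (Set.range Mx) := by
    refine ⟨0, ?_⟩
    rintro x ⟨t, rfl⟩
    exact le_trans (hmn_nonneg t) (hmn_le_Mx t)
  have hπ_le : ∀ t, π ≤ Mx t := fun t => ciInf_le hbdd t
  have hle_π : ∀ t, mn t ≤ π := by
    intro t
    refine le_ciInf fun s => ?_
    calc mn t ≤ mn (s + t) := hmn_mono s t
      _ ≤ Mx (s + t) := hmn_le_Mx _
      _ ≤ Mx s := by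
          have := hMx_anti t s
          rwa [add_comm] at this
  refine ⟨π, le_trans (hmn_nonneg 0) (hle_π 0), le_trans (hπ_le 0) (hMx_le_one 0), ?_⟩
  intro ε hε
  -- choose k with ρ^k < ε
  obtain ⟨k, hk⟩ := exists_pow_lt_of_lt_one hε hρ1
  refine ⟨k * N, fun u hu l hlW => ?_⟩
  have hosc_u : Mx u - mn u ≤ ρ ^ k := by
    have he : u = (u - k * N) + k * N := by omega
    calc Mx u - mn u = Mx ((u - k * N) + k * N) - mn ((u - k * N) + k * N) := by rw [← he]
      _ ≤ Mx (k * N) - mn (k * N) := hosc_anti _ _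
      _ ≤ ρ ^ k := hosc_geom k
  have h1 := hub u l hlW
  have h2 := hlb u l hlW
  have h3 := hπ_le u
  have h4 := hle_π u
  rw [abs_lt]
  constructor <;> nlinarith [hk]
end WithinClass

section RecLimit
variable {n : ℕ} {A : Matrix (Fin n) (Fin n) ℝ}

lemma rec_limit (h0 : ∀ i j, 0 ≤ A i j) (h1 : ∀ i, ∑ j, A i j ≤ 1) {W : Set (Fin n)}
    (hW : IsSinkSCC (fun a b => A a b ≠ 0) W)
    (hfull : ∀ w ∈ W, ∑ k, A w k = 1)
    (hcyc : ∃ k, 0 < k ∧ ∃ i ∈ W, WalkIn (fun a b => A a b ≠ 0) W k i i)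
    (hgcd : ∀ d : ℕ,
      (∀ k, 0 < k → (∃ i ∈ W, WalkIn (fun a b => A a b ≠ 0) W k i i) → d ∣ k) →
      d = 1) {j : Fin n} (hjW : j ∈ W) (i : Fin n) :
    ∃ L, Tendsto (fun t => (A ^ t) i j) atTop (nhds L) := by
  classical
  have hcl : ∀ a ∈ W, ∀ b, A a b ≠ 0 → b ∈ W := hW.2
  set Wf : Finset (Fin n) := Finset.univ.filter (fun x => x ∈ W) with hWf
  have hmemWf : ∀ x : Fin n, x ∈ Wf ↔ x ∈ W := by
    intro x; rw [hWf, Finset.mem_filter]; simp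
  set q : ℕ → Fin n → ℝ := fun t x => ∑ k ∈ Wf, (A ^ t) x k with hq
  have hq_chap : ∀ s u x, q (s + u) x = ∑ k, (A ^ s) x k * q u k := by
    intro s u x
    rw [hq]
    simp only [pow_add, Matrix.mul_apply]
    rw [Finset.sum_comm]
    simp [Finset.mul_sum]
  have hq_one : ∀ u, ∀ k ∈ W, q u k = 1 := fun u k hk => sum_W_pow_eq_one hcl hfull u hk
  have hq_nonneg : ∀ t x, 0 ≤ q t x :=
    fun t x => Finset.sum_nonneg fun k _ => _root_.pow_apply_nonneg h0 t x k
  have hq_le_one : ∀ t x, q t x ≤ 1 := by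
    intro t x
    refine le_trans ?_ (pow_row_sum_le h0 h1 t x)
    exact Finset.sum_le_sum_of_subset_of_nonneg (Finset.subset_univ _)
      (fun k _ _ => _root_.pow_apply_nonneg h0 t x k)
  have hq_mono : ∀ x, Monotone (fun t => q t x) := by
    intro x
    refine monotone_nat_of_le_succ fun t => ?_
    show q t x ≤ q (t + 1) x
    rw [hq_chap t 1 x]
    calc q t x = ∑ k ∈ Wf, (A ^ t) x k * 1 := by simp [hq]
      _ = ∑ k ∈ Wf, (A ^ t) x k * q 1 k := by
          refine Finset.sum_congr rfl fun k hk => ?_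
          rw [hq_one 1 k ((hmemWf k).mp hk)]
      _ ≤ ∑ k, (A ^ t) x k * q 1 k := by
          refine Finset.sum_le_sum_of_subset_of_nonneg (Finset.subset_univ _)
            (fun k _ _ => mul_nonneg (_root_.pow_apply_nonneg h0 t x k) (hq_nonneg 1 k))
  set qi : ℝ := ⨆ t, q t i with hqi
  have hbdd : BddAbove (Set.range fun t => q t i) := by
    refine ⟨1, ?_⟩
    rintro x ⟨t, rfl⟩
    exact hq_le_one t i
  have hq_le : ∀ t, q t i ≤ qi := fun t => le_ciSup hbdd t
  have hqi_le_one : qi ≤ 1 := ciSup_le fun t => hq_le_one t i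
  have hqi_nonneg : 0 ≤ qi := le_trans (hq_nonneg 0 i) (hq_le 0)
  obtain ⟨π, hπ0, hπ1, hπ⟩ := within_class_conv h0 hW hfull hcyc hgcd hjW
  refine ⟨π * qi, ?_⟩
  rw [Metric.tendsto_atTop]
  intro ε hε
  have hε4 : 0 < ε / 4 := by linarith
  obtain ⟨u0, hu0⟩ := hπ (ε / 4) hε4
  have happrox : ∃ s0, ∀ s, s0 ≤ s → qi - ε / 4 < q s i := by
    have hlt : qi - ε / 4 < ⨆ t, q t i := by rw [← hqi]; linarith
    obtain ⟨s0, hs0⟩ := exists_lt_of_lt_ciSup (f := fun t => q t i) hlt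
    exact ⟨s0, fun s hs => lt_of_lt_of_le hs0 (hq_mono i hs)⟩
  obtain ⟨s0, hs0⟩ := happrox
  refine ⟨s0 + u0, fun t ht => ?_⟩
  set s : ℕ := t - u0 with hsdef
  have hts : t = s + u0 := by omega
  have hss0 : s0 ≤ s := by omega
  set NWf : Finset (Fin n) := Finset.univ.filter (fun x => ¬ x ∈ W) with hNWf
  have hsplit : (A ^ t) i j
      = ∑ k ∈ Wf, (A ^ s) i k * (A ^ u0) k j
        + ∑ k ∈ NWf, (A ^ s) i k * (A ^ u0) k j := by
    rw [hts, pow_add, Matrix.mul_apply]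
    exact (Finset.sum_filter_add_sum_filter_not Finset.univ (fun x => x ∈ W) _).symm
  -- lower bound
  have hlow : q s i * (π - ε / 4) ≤ (A ^ t) i j := by
    rw [hsplit]
    have hterm : ∀ k ∈ Wf, (A ^ s) i k * (π - ε / 4) ≤ (A ^ s) i k * (A ^ u0) k j := by
      intro k hk
      refine mul_le_mul_of_nonneg_left ?_ (_root_.pow_apply_nonneg h0 s i k)
      have := hu0 u0 (le_refl u0) k ((hmemWf k).mp hk)
      rw [abs_lt] at this
      linarith [this.1]
    have h2 : 0 ≤ ∑ k ∈ NWf, (A ^ s) i k * (A ^ u0) k j :=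
      Finset.sum_nonneg fun k _ =>
        mul_nonneg (_root_.pow_apply_nonneg h0 s i k) (_root_.pow_apply_nonneg h0 u0 k j)
    calc q s i * (π - ε / 4) = ∑ k ∈ Wf, (A ^ s) i k * (π - ε / 4) := by
          rw [hq]; rw [Finset.sum_mul]
      _ ≤ ∑ k ∈ Wf, (A ^ s) i k * (A ^ u0) k j := Finset.sum_le_sum hterm
      _ ≤ _ := by linarith
  -- upper bound
  have hupp : (A ^ t) i j ≤ q s i * (π + ε / 4) + (q t i - q s i) := by
    rw [hsplit]
    have hfirst : ∑ k ∈ Wf, (A ^ s) i k * (A ^ u0) k j ≤ q s i * (π + ε / 4) := by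
      rw [hq, Finset.sum_mul]
      refine Finset.sum_le_sum fun k hk => ?_
      refine mul_le_mul_of_nonneg_left ?_ (_root_.pow_apply_nonneg h0 s i k)
      have := hu0 u0 (le_refl u0) k ((hmemWf k).mp hk)
      rw [abs_lt] at this
      linarith [this.2]
    have hsecond : ∑ k ∈ NWf, (A ^ s) i k * (A ^ u0) k j ≤ q t i - q s i := by
      have hstep : ∀ k ∈ NWf, (A ^ s) i k * (A ^ u0) k j ≤ (A ^ s) i k * q u0 k := by
        intro k hk
        refine mul_le_mul_of_nonneg_left ?_ (_root_.pow_apply_nonneg h0 s i k)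
        exact Finset.single_le_sum (f := fun l => (A ^ u0) k l)
          (fun l _ => _root_.pow_apply_nonneg h0 u0 k l) ((hmemWf j).mpr hjW)
      have hsum2 : ∑ k ∈ NWf, (A ^ s) i k * q u0 k = q t i - q s i := by
        have hdecomp : ∑ k ∈ Wf, (A ^ s) i k * q u0 k + ∑ k ∈ NWf, (A ^ s) i k * q u0 k
            = q t i := by
          rw [hts, hq_chap s u0 i]
          exact Finset.sum_filter_add_sum_filter_not Finset.univ (fun x => x ∈ W) _
        have hWterm : ∑ k ∈ Wf, (A ^ s) i k * q u0 k = q s i := by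
          calc ∑ k ∈ Wf, (A ^ s) i k * q u0 k = ∑ k ∈ Wf, (A ^ s) i k := by
                refine Finset.sum_congr rfl fun k hk => ?_
                rw [hq_one u0 k ((hmemWf k).mp hk), mul_one]
            _ = q s i := rfl
        linarith
      calc ∑ k ∈ NWf, (A ^ s) i k * (A ^ u0) k j
          ≤ ∑ k ∈ NWf, (A ^ s) i k * q u0 k := Finset.sum_le_sum hstep
        _ = q t i - q s i := hsum2
    linarith
  rw [Real.dist_eq, abs_lt]
  have hq1 := hq_le_one s i
  have hq2 := hq_nonneg s i
  have hq3 := hq_le t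
  have hq4 := hq_le s
  have hq5 := hs0 s hss0
  constructor <;> nlinarith
end RecLimit

theorem stmt5 {n : ℕ} (A : Matrix (Fin n) (Fin n) ℝ)
    (h0 : ∀ i j, 0 ≤ A i j) (h1 : ∀ i, ∑ j, A i j ≤ 1)
    (hap : ∀ W : Set (Fin n), IsSinkSCC (fun a b => A a b ≠ 0) W →
      ((∃ i, W = {i} ∧ A i i = 0) ∨
       ((∃ k, 0 < k ∧ ∃ i ∈ W, WalkIn (fun a b => A a b ≠ 0) W k i i) ∧
        (∀ d : ℕ,
          (∀ k, 0 < k → (∃ i ∈ W, WalkIn (fun a b => A a b ≠ 0) W k i i) → d ∣ k) →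
          d = 1)))) :
    ∃ M : Matrix (Fin n) (Fin n) ℝ,
      Tendsto (fun t : ℕ => A ^ t) atTop (nhds M) ∧
      (∀ i j, 0 ≤ M i j) ∧ (∀ i, ∑ j, M i j ≤ 1) := by
  classical
  have key : ∀ i j, ∃ L, Tendsto (fun t => (A ^ t) i j) atTop (nhds L) := by
    intro i j
    by_cases hj : j ∈ recSet A
    · obtain ⟨W, hW, hjW, hfull⟩ := hj
      rcases hap W hW with ⟨i0, hWi0, hzero⟩ | ⟨hcyc, hgcd⟩
      · exfalso
        have hi0W : i0 ∈ W := by rw [hWi0]; rfl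
        have hsum : ∑ k, A i0 k = 1 := hfull i0 hi0W
        have hzero' : ∑ k, A i0 k = 0 := by
          refine Finset.sum_eq_zero fun k _ => ?_
          by_contra hk
          have hkW := hW.2 i0 hi0W k hk
          rw [hWi0] at hkW
          have hki : k = i0 := hkW
          exact hk (hki ▸ hzero)
        linarith
      · exact rec_limit h0 h1 hW hfull hcyc hgcd hjW i
    · exact ⟨0, tendsto_zero_of_not_rec h0 h1 hj i⟩
  choose L hL using key
  refine ⟨Matrix.of L, ?_, ?_, ?_⟩
  · exact tendsto_pi_nhds.mpr fun i => tendsto_pi_nhds.mpr fun j => hL i j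
  · intro i j
    exact ge_of_tendsto' (hL i j) (fun t => _root_.pow_apply_nonneg h0 t i j)
  · intro i
    have hsum : Tendsto (fun t => ∑ j, (A ^ t) i j) atTop (nhds (∑ j, L i j)) :=
      tendsto_finset_sum _ (fun j _ => hL i j)
    exact le_of_tendsto' hsum (fun t => pow_row_sum_le h0 h1 t i)
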